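/- Define G(x) = 2e^{x−1} − 2x for x ∈ ℝ. Then G(x) > 0 for all x < 1, and there exists a unique differentiable function φ : ℝ → ℝ such that φ(t) < 1 for all t, φ(0) = 0, and φ′(t) = −√(G(φ(t))) for all t ∈ ℝ. Moreover, φ is strictly decreasing, φ(t) → 1 as t → −∞, and φ(t) → −∞ as t → ∞. -/

import Mathlib

open Real Filter Set Topology

open MeasureTheory intervalIntegral

noncomputable def Gc (x : ℝ) : ℝ := 2 * Real.exp (x - 1) - 2 * x
noncomputable def rr (x : ℝ) : ℝ := (Real.sqrt (Gc x))⁻¹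
noncomputable def TT (y : ℝ) : ℝ := ∫ x in y..(0:ℝ), rr x

lemma Gc_pos {x : ℝ} (hx : x ≠ 1) : 0 < Gc x := by
  have h := Real.add_one_lt_exp (x := x - 1) (sub_ne_zero.mpr hx)
  unfold Gc; nlinarith

lemma sqrtGc_pos {x : ℝ} (hx : x ≠ 1) : 0 < Real.sqrt (Gc x) :=
  Real.sqrt_pos.mpr (Gc_pos hx)

lemma rr_pos {x : ℝ} (hx : x ≠ 1) : 0 < rr x := inv_pos.mpr (sqrtGc_pos hx)

lemma continuous_Gc : Continuous Gc := by unfold Gc; continuity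

lemma rr_contAt {x : ℝ} (hx : x ≠ 1) : ContinuousAt rr x :=
  ((Real.continuous_sqrt.comp continuous_Gc).continuousAt).inv₀ (ne_of_gt (sqrtGc_pos hx))

lemma rr_intble {a b : ℝ} (ha : a < 1) (hb : b < 1) : IntervalIntegrable rr volume a b := by
  apply ContinuousOn.intervalIntegrable
  intro x hx
  have hx1 : x < 1 := lt_of_le_of_lt hx.2 (max_lt ha hb)
  exact (rr_contAt hx1.ne).continuousWithinAt

lemma TT_hasDeriv {y : ℝ} (hy : y < 1) : HasDerivAt TT (-(rr y)) y := by
  refine integral_hasDerivAt_left (rr_intble hy one_pos) ?_ (rr_contAt hy.ne)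
  exact ContinuousAt.stronglyMeasurableAtFilter isOpen_Iio (fun x hx => rr_contAt (ne_of_lt hx)) y hy

lemma TT_zero : TT 0 = 0 := integral_same

lemma TT_lt {a b : ℝ} (hab : a < b) (hb : b < 1) : TT b < TT a := by
  have ha : a < 1 := hab.trans hb
  have hsplit : (∫ x in a..b, rr x) + (∫ x in b..(0:ℝ), rr x) = ∫ x in a..(0:ℝ), rr x :=
    integral_add_adjacent_intervals (rr_intble ha hb) (rr_intble hb one_pos)
  have hpos : 0 < ∫ x in a..b, rr x := by
    apply intervalIntegral_pos_of_pos_on (rr_intble ha hb)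
      (fun x hx => rr_pos (ne_of_lt (hx.2.trans hb))) hab
  unfold TT
  linarith [hsplit]

lemma TT_anti {a b : ℝ} (hab : a ≤ b) (hb : b < 1) : TT b ≤ TT a := by
  rcases eq_or_lt_of_le hab with rfl | h
  · exact le_refl _
  · exact (TT_lt h hb).le

lemma TT_inj {a b : ℝ} (ha : a < 1) (hb : b < 1) (h : TT a = TT b) : a = b := by
  rcases lt_trichotomy a b with hl | he | hl
  · exact absurd h (ne_of_lt (TT_lt hl hb)).symm
  · exact he
  · exact absurd h (ne_of_lt (TT_lt hl ha))

lemma psi_hasDeriv {x : ℝ} (hx : x < 1) :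
    HasDerivAt (fun x => -(Real.sqrt 2 * Real.sqrt (1 - x))) (Real.sqrt (2 * (1 - x)))⁻¹ x := by
  have h1 : HasDerivAt (fun x : ℝ => 1 - x) (-1) x := by
    simpa using (hasDerivAt_id x).const_sub 1
  have h2 : HasDerivAt (fun x : ℝ => Real.sqrt (1 - x)) (-1 / (2 * Real.sqrt (1 - x))) x :=
    h1.sqrt (by linarith)
  have h3 := (h2.const_mul (Real.sqrt 2)).neg
  refine HasDerivAt.congr_deriv h3 ?_
  have hs2 : Real.sqrt 2 > 0 := Real.sqrt_pos.mpr (by norm_num)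
  have hs1x : Real.sqrt (1 - x) > 0 := Real.sqrt_pos.mpr (by linarith)
  rw [Real.sqrt_mul (by norm_num) (1 - x)]
  have h22 : Real.sqrt 2 * Real.sqrt 2 = 2 := Real.mul_self_sqrt (by norm_num)
  field_simp
  nlinarith [hs2, hs1x]

lemma Gc_le_lin {x : ℝ} (hx : x ≤ 0) : Gc x ≤ 2 * (1 - x) := by
  have : Real.exp (x - 1) ≤ 1 := Real.exp_le_one_iff.mpr (by linarith)
  unfold Gc; nlinarith

lemma TT_lower {y : ℝ} (hy : y ≤ 0) : Real.sqrt 2 * (Real.sqrt (1 - y) - 1) ≤ TT y := by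
  have hy1 : y < 1 := lt_of_le_of_lt hy one_pos
  have hint : (∫ x in y..(0:ℝ), (Real.sqrt (2 * (1 - x)))⁻¹) =
      Real.sqrt 2 * (Real.sqrt (1 - y) - 1) := by
    have := intervalIntegral.integral_eq_sub_of_hasDerivAt (a := y) (b := 0)
      (f := fun x => -(Real.sqrt 2 * Real.sqrt (1 - x)))
      (f' := fun x => (Real.sqrt (2 * (1 - x)))⁻¹)
      (fun x hx => psi_hasDeriv (by
        rw [Set.uIcc_of_le hy] at hx
        linarith [hx.2]))
      (by
        apply ContinuousOn.intervalIntegrable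
        apply ContinuousOn.inv₀
        · fun_prop
        · intro x hx
          have hx1 : x ≤ max y 0 := hx.2
          have hx0 : x ≤ 0 := by simpa [max_eq_right hy] using hx1
          have : (0:ℝ) < 2 * (1 - x) := by linarith
          exact ne_of_gt (Real.sqrt_pos.mpr this))
    rw [this]
    simp [Real.sqrt_mul (by norm_num : (2:ℝ) ≥ 0)]
    ring
  rw [← hint]
  apply intervalIntegral.integral_mono_on hy _ (rr_intble hy1 one_pos)
  · intro x hx
    have hx0 : x ≤ 0 := hx.2
    have hx1 : x < 1 := lt_of_le_of_lt hx0 one_pos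
    have h1 : Real.sqrt (Gc x) ≤ Real.sqrt (2 * (1 - x)) := Real.sqrt_le_sqrt (Gc_le_lin hx0)
    have h2 : 0 < Real.sqrt (Gc x) := sqrtGc_pos hx1.ne
    simpa [rr] using inv_anti₀ h2 h1
  · apply ContinuousOn.intervalIntegrable
    apply ContinuousOn.inv₀
    · fun_prop
    · intro x hx
      have hx0 : x ≤ 0 := by
        have := hx.2; simpa [max_eq_right hy] using this
      have : (0:ℝ) < 2 * (1 - x) := by linarith
      exact ne_of_gt (Real.sqrt_pos.mpr this)

lemma Gc_le_sq {x : ℝ} (hx : x ≤ 1) : Gc x ≤ (1 - x) ^ 2 := by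
  set s : ℝ := 1 - x with hs
  have hs0 : 0 ≤ s := by linarith
  have h1 : 1 + s + s ^ 2 / 2 ≤ Real.exp s := Real.quadratic_le_exp_of_nonneg hs0
  have h2 : Real.exp (x - 1) = (Real.exp s)⁻¹ := by
    rw [← Real.exp_neg]; congr 1; linarith
  have hep : 0 < Real.exp s := Real.exp_pos s
  have h3 : Real.exp (x - 1) ≤ (1 + s + s ^ 2 / 2)⁻¹ := by
    rw [h2]
    exact inv_anti₀ (by nlinarith) h1
  have h4 : (1 + s + s ^ 2 / 2)⁻¹ ≤ 1 - s + s ^ 2 / 2 := by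
    rw [inv_le_iff_one_le_mul₀ (by nlinarith)]
    nlinarith
  unfold Gc
  nlinarith [h3.trans h4]

lemma TT_upper {y : ℝ} (hy0 : 0 ≤ y) (hy1 : y < 1) : TT y ≤ Real.log (1 - y) := by
  have hint : (∫ x in (0:ℝ)..y, (1 - x)⁻¹) = -Real.log (1 - y) := by
    have := intervalIntegral.integral_eq_sub_of_hasDerivAt (a := 0) (b := y)
      (f := fun x => -Real.log (1 - x)) (f' := fun x => (1 - x)⁻¹)
      (fun x hx => by
        rw [Set.uIcc_of_le hy0] at hx
        have hx1 : x < 1 := lt_of_le_of_lt hx.2 hy1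
        have h1 : HasDerivAt (fun x : ℝ => 1 - x) (-1) x := by
          simpa using (hasDerivAt_id x).const_sub 1
        have h2 := (h1.log (by linarith)).neg
        refine HasDerivAt.congr_deriv h2 ?_
        field_simp)
      (by
        apply ContinuousOn.intervalIntegrable
        apply ContinuousOn.inv₀ (by fun_prop)
        intro x hx
        rw [Set.uIcc_of_le hy0] at hx
        have : x < 1 := lt_of_le_of_lt hx.2 hy1
        intro h; linarith [sub_eq_zero.mp h])
    rw [this]; simp
  have hmono : (∫ x in (0:ℝ)..y, (1 - x)⁻¹) ≤ ∫ x in (0:ℝ)..y, rr x := by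
    apply intervalIntegral.integral_mono_on hy0 _ (rr_intble one_pos hy1)
    · intro x hx
      have hx1 : x < 1 := lt_of_le_of_lt hx.2 hy1
      have hpos : 0 < 1 - x := by linarith
      have h1 : Real.sqrt (Gc x) ≤ 1 - x := by
        calc Real.sqrt (Gc x) ≤ Real.sqrt ((1 - x) ^ 2) := Real.sqrt_le_sqrt (Gc_le_sq hx1.le)
        _ = 1 - x := by rw [Real.sqrt_sq hpos.le]
      simpa [rr] using inv_anti₀ (sqrtGc_pos hx1.ne) h1
    · apply ContinuousOn.intervalIntegrable
      apply ContinuousOn.inv₀ (by fun_prop)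
      intro x hx
      rw [Set.uIcc_of_le hy0] at hx
      have : x < 1 := lt_of_le_of_lt hx.2 hy1
      intro h; linarith [sub_eq_zero.mp h]
  have hsym : TT y = -(∫ x in (0:ℝ)..y, rr x) := by
    unfold TT; exact intervalIntegral.integral_symm 0 y
  rw [hsym]
  linarith [hint ▸ hmono]

lemma TT_contOn : ContinuousOn TT (Set.Iio 1) := fun x hx =>
  ((TT_hasDeriv hx).continuousAt).continuousWithinAt

lemma TT_surj (c : ℝ) : ∃ y, y < 1 ∧ TT y = c := by
  -- choose b with TT b ≤ c
  obtain ⟨b, hb0, hb1, hbc⟩ : ∃ b, 0 ≤ b ∧ b < 1 ∧ TT b ≤ c := by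
    rcases le_or_gt 0 c with h | h
    · exact ⟨0, le_refl _, one_pos, by rw [TT_zero]; exact h⟩
    · refine ⟨1 - Real.exp c, ?_, ?_, ?_⟩
      · have : Real.exp c < 1 := Real.exp_lt_one_iff.mpr h
        linarith
      · linarith [Real.exp_pos c]
      · have h1 : TT (1 - Real.exp c) ≤ Real.log (1 - (1 - Real.exp c)) := by
          apply TT_upper
          · have : Real.exp c < 1 := Real.exp_lt_one_iff.mpr h
            linarith
          · linarith [Real.exp_pos c]
        simpa [Real.log_exp] using h1
  -- choose a ≤ 0 with c ≤ TT a
  set a : ℝ := -(1 + |c|) ^ 2 with ha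
  have ha0 : a ≤ 0 := neg_nonpos.mpr (by positivity)
  have hac : c ≤ TT a := by
    have h1 : Real.sqrt 2 * (Real.sqrt (1 - a) - 1) ≤ TT a := TT_lower ha0
    have h2 : (1 + |c|) ≤ Real.sqrt (1 - a) := by
      rw [ha]
      have : (1 + |c|) ^ 2 ≤ 1 - -(1 + |c|) ^ 2 := by nlinarith [abs_nonneg c]
      calc (1 + |c|) = Real.sqrt ((1 + |c|) ^ 2) := by
            rw [Real.sqrt_sq (by positivity)]
        _ ≤ _ := Real.sqrt_le_sqrt this
    have h3 : (1:ℝ) ≤ Real.sqrt 2 := by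
      rw [show (1:ℝ) = Real.sqrt 1 by simp]
      exact Real.sqrt_le_sqrt (by norm_num)
    have h4 : |c| ≤ Real.sqrt 2 * (Real.sqrt (1 - a) - 1) := by
      calc |c| = 1 * |c| := (one_mul _).symm
        _ ≤ Real.sqrt 2 * (Real.sqrt (1 - a) - 1) := by
            apply mul_le_mul h3 (by linarith) (abs_nonneg c) (by linarith)
    linarith [le_abs_self c, h4.trans h1]
  have hab : a ≤ b := ha0.trans hb0
  have hsub : Set.Icc a b ⊆ Set.Iio 1 := fun x hx => lt_of_le_of_lt hx.2 hb1
  have hcont : ContinuousOn TT (Set.Icc a b) := TT_contOn.mono hsub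
  have hIVT := intermediate_value_Icc' hab hcont
  have hc : c ∈ Set.Icc (TT b) (TT a) := ⟨hbc, hac⟩
  obtain ⟨y, hy, hTy⟩ := hIVT hc
  exact ⟨y, lt_of_le_of_lt hy.2 hb1, hTy⟩

lemma sol_TT_eq {ψ : ℝ → ℝ} (hlt : ∀ t, ψ t < 1) (h0 : ψ 0 = 0)
    (hd : ∀ t, HasDerivAt ψ (-Real.sqrt (Gc (ψ t))) t) : ∀ t, TT (ψ t) = t := by
  have hF : ∀ t, HasDerivAt (fun t => TT (ψ t) - t) 0 t := by
    intro t
    have h1 : HasDerivAt (fun t => TT (ψ t)) (-(rr (ψ t)) * -Real.sqrt (Gc (ψ t))) t :=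
      (TT_hasDeriv (hlt t)).comp t (hd t)
    have h2 : -(rr (ψ t)) * -Real.sqrt (Gc (ψ t)) = 1 := by
      have h := sqrtGc_pos (hlt t).ne
      field_simp [rr]
      unfold rr; exact inv_mul_cancel₀ h.ne'
    rw [h2] at h1
    exact HasDerivAt.congr_deriv (h1.sub (hasDerivAt_id' t)) (by norm_num)
  have hdiff : Differentiable ℝ (fun t => TT (ψ t) - t) := fun t => (hF t).differentiableAt
  intro t
  have hconst := is_const_of_deriv_eq_zero hdiff (fun t => (hF t).deriv) t 0
  simp only [h0, TT_zero, sub_zero] at hconst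
  linarith [hconst]

lemma phi_cont {φ : ℝ → ℝ} (hlt : ∀ t, φ t < 1) (hT : ∀ t, TT (φ t) = t) (t : ℝ) :
    ContinuousAt φ t := by
  rw [Metric.continuousAt_iff]
  intro ε hε
  set y := φ t with hy
  have hylt : y < 1 := hlt t
  set ε₀ : ℝ := min (ε / 2) ((1 - y) / 2) with hε₀
  have hε₀pos : 0 < ε₀ := lt_min (by linarith) (by linarith)
  have hy1 : y + ε₀ < 1 := by
    have : ε₀ ≤ (1 - y) / 2 := min_le_right _ _
    linarith
  have hTy : TT y = t := hT t
  have hlo : TT (y + ε₀) < t := hTy ▸ TT_lt (by linarith) hy1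
  have hhi : t < TT (y - ε₀) := hTy ▸ TT_lt (by linarith) hylt
  refine ⟨min (t - TT (y + ε₀)) (TT (y - ε₀) - t), lt_min (by linarith) (by linarith), ?_⟩
  intro s hs
  rw [Real.dist_eq] at hs
  have hs1 : TT (y + ε₀) < s := by
    have h := abs_lt.mp (lt_of_lt_of_le hs (min_le_left _ _))
    linarith [h.1]
  have hs2 : s < TT (y - ε₀) := by
    have h := abs_lt.mp (lt_of_lt_of_le hs (min_le_right _ _))
    linarith [h.2]
  have hA : φ s < y + ε₀ := by
    by_contra h
    push_neg at h
    have := TT_anti h (hlt s)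
    rw [hT s] at this
    linarith
  have hB : y - ε₀ < φ s := by
    by_contra h
    push_neg at h
    have := TT_anti h (by linarith : y - ε₀ < 1)
    rw [hT s] at this
    linarith
  rw [Real.dist_eq]
  have : ε₀ ≤ ε / 2 := min_le_left _ _
  rw [abs_lt]
  constructor <;> linarith

lemma phi_deriv {φ : ℝ → ℝ} (hlt : ∀ t, φ t < 1) (hT : ∀ t, TT (φ t) = t) (t : ℝ) :
    HasDerivAt φ (-Real.sqrt (Gc (φ t))) t := by
  have h := HasDerivAt.of_local_left_inverse (phi_cont hlt hT t) (TT_hasDeriv (hlt t))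
    (by simpa using (rr_pos (hlt t).ne).ne') (Filter.Eventually.of_forall hT)
  have : (-(rr (φ t)))⁻¹ = -Real.sqrt (Gc (φ t)) := by
    rw [inv_neg]
    simp [rr]
  rwa [this] at h

theorem stmt_17 (G : ℝ → ℝ) (hG : ∀ x, G x = 2 * Real.exp (x - 1) - 2 * x) :
    (∀ x < (1 : ℝ), 0 < G x) ∧
    (∃! φ : ℝ → ℝ, (∀ t, φ t < 1) ∧ φ 0 = 0 ∧
      ∀ t, HasDerivAt φ (-Real.sqrt (G (φ t))) t) ∧
    (∀ φ : ℝ → ℝ, ((∀ t, φ t < 1) ∧ φ 0 = 0 ∧ ∀ t, HasDerivAt φ (-Real.sqrt (G (φ t))) t) →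
      StrictAnti φ ∧ Filter.Tendsto φ Filter.atBot (𝓝 1) ∧
        Filter.Tendsto φ Filter.atTop Filter.atBot) := by
  have hGeq : G = Gc := funext fun x => (hG x).trans rfl
  subst hGeq
  choose φ hφlt hφT using TT_surj
  have hφ0 : φ 0 = 0 := TT_inj (hφlt 0) one_pos ((hφT 0).trans TT_zero.symm)
  have hφd : ∀ t, HasDerivAt φ (-Real.sqrt (Gc (φ t))) t := phi_deriv hφlt hφT
  refine ⟨fun x hx => Gc_pos hx.ne, ⟨φ, ⟨hφlt, hφ0, hφd⟩, ?_⟩, ?_⟩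
  · rintro ψ ⟨hlt, h0, hd⟩
    funext t
    have hTψ := sol_TT_eq hlt h0 hd
    exact TT_inj (hlt t) (hφlt t) ((hTψ t).trans (hφT t).symm)
  · rintro ψ ⟨hlt, h0, hd⟩
    have hTψ := sol_TT_eq hlt h0 hd
    refine ⟨?_, ?_, ?_⟩
    · intro a b hab
      by_contra h
      push_neg at h
      have h2 := TT_anti h (hlt b)
      rw [hTψ a, hTψ b] at h2
      linarith
    · rw [Metric.tendsto_nhds]
      intro ε hε
      rw [Filter.eventually_atBot]
      set y₀ : ℝ := max 0 (1 - ε / 2) with hy₀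
      have hy₀1 : y₀ < 1 := max_lt one_pos (by linarith)
      refine ⟨TT y₀ - 1, fun t ht => ?_⟩
      have htlt : t < TT y₀ := by linarith
      have hgt : y₀ < ψ t := by
        by_contra h
        push_neg at h
        have h2 := TT_anti h hy₀1
        rw [hTψ t] at h2
        linarith
      have h1 : ψ t < 1 := hlt t
      have h2 : 1 - ε / 2 ≤ y₀ := le_max_right _ _
      rw [Real.dist_eq, abs_lt]
      constructor <;> linarith
    · rw [Filter.tendsto_atBot]
      intro c
      rw [Filter.eventually_atTop]
      set y₁ : ℝ := min c 0 with hy₁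
      have hy₁1 : y₁ < 1 := lt_of_le_of_lt (min_le_right _ _) one_pos
      refine ⟨TT y₁ + 1, fun t ht => ?_⟩
      have h3 : TT y₁ < t := by linarith
      have hlt2 : ψ t < y₁ := by
        by_contra h
        push_neg at h
        have h2 := TT_anti h (hlt t)
        rw [hTψ t] at h2
        linarith
      linarith [min_le_left c 0]
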